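/- Suppose the entries x_i of X are independent Poisson random variables with rates m_i = ∏_p a_p(i_p) (the rank-one PCP model). Then for every p and j, E[x_p(j)] = a_p(j) ∏_{q≠p} λ_q = λ a_p(j)/λ_p, and consequently the expectation of the negative Hessian of the rank-one PCP loglikelihood is the block matrix I(θ) whose (p,p) diagonal block has (i,j) entry [i = j] · λ/(λ_p a_p(i)) and whose (p,q) off-diagonal block (p ≠ q) has every entry equal to λ/(λ_p λ_q). -/

import Mathlib

open Finset

noncomputable section

variable {P : ℕ} {N : Fin P → ℕ}

/-- Rank-one parameter tensor entry `m_i = ∏_p a_p(i_p)`. -/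
def mOne (a : (p : Fin P) → Fin (N p) → ℝ) (i : (p : Fin P) → Fin (N p)) : ℝ :=
  ∏ p, a p (i p)

/-- Rank-one PCP loglikelihood `ℓ(X|θ) = Σ_i [ x_i log m_i − m_i − log(x_i!) ]`. -/
def llik1 (a : (p : Fin P) → Fin (N p) → ℝ) (X : ((p : Fin P) → Fin (N p)) → ℕ) : ℝ :=
  ∑ i : (p : Fin P) → Fin (N p),
    ((X i : ℝ) * Real.log (mOne a i) - mOne a i - Real.log (Nat.factorial (X i) : ℝ))

/-- Mode-`p` marginal sum `x_p(j) = Σ_{i : i_p = j} x_i` (as a real number). -/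
def xmarg (X : ((p : Fin P) → Fin (N p)) → ℕ) (p : Fin P) (j : Fin (N p)) : ℝ :=
  ∑ i ∈ Finset.univ.filter (fun i : (q : Fin P) → Fin (N q) => i p = j), (X i : ℝ)

/-- Factor sum `λ_p = Σ_j a_p(j)`. -/
def lam1 (a : (p : Fin P) → Fin (N p) → ℝ) (p : Fin P) : ℝ :=
  ∑ j, a p j

/-- Probability of the count tensor `X` under the rank-one PCP model: the product of
the Poisson probabilities `e^{-m_i} m_i^{x_i} / x_i!` over all multi-indices (the
entries of `X` are independent Poisson with rates `m_i = ∏_p a_p(i_p)`). -/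
def pmf1 (a : (p : Fin P) → Fin (N p) → ℝ) (X : ((p : Fin P) → Fin (N p)) → ℕ) : ℝ :=
  ∏ i : (p : Fin P) → Fin (N p),
    Real.exp (-(mOne a i)) * mOne a i ^ X i / (Nat.factorial (X i) : ℝ)

set_option maxHeartbeats 1000000


/-- Poisson pmf sums to 1. -/
lemma po_hasSum {μ : ℝ} (hμ : 0 ≤ μ) :
    HasSum (fun n : ℕ => Real.exp (-μ) * μ ^ n / (n.factorial : ℝ)) 1 := by
  have := ProbabilityTheory.poissonPMFRealSum μ.toNNReal
  simpa [ProbabilityTheory.poissonPMFReal, Real.coe_toNNReal μ hμ] using this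

/-- Poisson mean. -/
lemma po_mean {μ : ℝ} (hμ : 0 ≤ μ) :
    HasSum (fun n : ℕ => (n : ℝ) * (Real.exp (-μ) * μ ^ n / (n.factorial : ℝ))) μ := by
  set f : ℕ → ℝ := fun n => (n : ℝ) * (Real.exp (-μ) * μ ^ n / (n.factorial : ℝ)) with hf
  have h1 : HasSum (fun n : ℕ => f (n + 1)) μ := by
    have h := (po_hasSum hμ).mul_left μ
    rw [mul_one] at h
    convert h using 2 with n
    · rfl
    have hfac : ((n.factorial : ℝ)) ≠ 0 := Nat.cast_ne_zero.mpr n.factorial_ne_zero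
    simp only [hf, Nat.factorial_succ, pow_succ]
    push_cast
    field_simp
  have h2 := (hasSum_nat_add_iff (f := f) 1).mp h1
  simpa [hf] using h2


lemma hasSum_pi_prod_fin : ∀ (n : ℕ) (f : Fin n → ℕ → ℝ) (S : Fin n → ℝ),
    (∀ i k, 0 ≤ f i k) → (∀ i, HasSum (f i) (S i)) →
    HasSum (fun X : Fin n → ℕ => ∏ i, f i (X i)) (∏ i, S i) := by
  intro n
  induction n with
  | zero =>
    intro f S _ _
    have : HasSum (fun _ : Fin 0 → ℕ => (1 : ℝ)) 1 := by
      simpa using hasSum_fintype (fun _ : Fin 0 → ℕ => (1 : ℝ))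
    simpa using this
  | succ n ih =>
    intro f S h0 hS
    set g : (Fin n → ℕ) → ℝ := fun X => ∏ i : Fin n, f (Fin.succ i) (X i) with hgdef
    have hg : HasSum g (∏ i : Fin n, S (Fin.succ i)) :=
      ih (fun i => f i.succ) (fun i => S i.succ) (fun i k => h0 _ _) (fun i => hS _)
    have h1 : 0 ≤ f 0 := fun k => h0 0 k
    have h2 : 0 ≤ g := fun X => Finset.prod_nonneg fun i _ => h0 _ _
    have hsumm : Summable (fun p : ℕ × (Fin n → ℕ) => f 0 p.1 * g p.2) :=
      (hS 0).summable.mul_of_nonneg hg.summable h1 h2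
    have hmul : HasSum (fun p : ℕ × (Fin n → ℕ) => f 0 p.1 * g p.2)
        (S 0 * ∏ i : Fin n, S (Fin.succ i)) :=
      (hS 0).mul hg hsumm
    have h2' := (Fin.consEquiv (fun _ : Fin (n+1) => ℕ)).symm.hasSum_iff.mpr hmul
    rw [Fin.prod_univ_succ]
    convert h2' using 1
    funext X
    simp [hgdef, Function.comp, Fin.consEquiv, Fin.prod_univ_succ, Fin.tail]

lemma hasSum_pi_prod {ι : Type*} [Fintype ι] (f : ι → ℕ → ℝ) (S : ι → ℝ)
    (h0 : ∀ i k, 0 ≤ f i k) (hS : ∀ i, HasSum (f i) (S i)) :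
    HasSum (fun X : ι → ℕ => ∏ i, f i (X i)) (∏ i, S i) := by
  classical
  let e := Fintype.equivFin ι
  have h := hasSum_pi_prod_fin _ (fun k => f (e.symm k)) (fun k => S (e.symm k))
    (fun i k => h0 _ _) (fun i => hS _)
  have key := (Equiv.piCongrLeft' (fun _ => ℕ) e).hasSum_iff.mpr h
  have hfun : (fun X : ι → ℕ => ∏ i, f i (X i)) =
      (fun X : Fin (Fintype.card ι) → ℕ => ∏ k, f (e.symm k) (X k)) ∘
        (Equiv.piCongrLeft' (fun _ => ℕ) e) := by
    funext X
    simp only [Function.comp, Equiv.piCongrLeft']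
    exact (Equiv.prod_comp e.symm (fun i => f i (X i))).symm
  rw [hfun, ← Equiv.prod_comp e.symm S]
  exact key

section Model

variable {P : ℕ} {N : Fin P → ℕ}

lemma mOne_pos (a : (p : Fin P) → Fin (N p) → ℝ) (ha : ∀ p j, 0 < a p j)
    (i : (p : Fin P) → Fin (N p)) : 0 < mOne a i :=
  Finset.prod_pos fun p _ => ha p (i p)

lemma pmf1_hasSum (a : (p : Fin P) → Fin (N p) → ℝ) (ha : ∀ p j, 0 < a p j) :
    HasSum (pmf1 a) 1 := by
  have h := hasSum_pi_prod
    (fun i : (p : Fin P) → Fin (N p) => fun n : ℕ =>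
      Real.exp (-(mOne a i)) * mOne a i ^ n / (n.factorial : ℝ))
    (fun _ => (1 : ℝ))
    (fun i k => div_nonneg (mul_nonneg (Real.exp_nonneg _)
      (pow_nonneg (mOne_pos a ha i).le _)) (Nat.cast_nonneg _))
    (fun i => po_hasSum (mOne_pos a ha i).le)
  rw [Finset.prod_const_one] at h
  exact h

lemma pmf1_moment (a : (p : Fin P) → Fin (N p) → ℝ) (ha : ∀ p j, 0 < a p j)
    (i₀ : (p : Fin P) → Fin (N p)) :
    HasSum (fun X : ((p : Fin P) → Fin (N p)) → ℕ => pmf1 a X * (X i₀ : ℝ)) (mOne a i₀) := by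
  classical
  set f : ((p : Fin P) → Fin (N p)) → ℕ → ℝ := fun i n =>
    (if i = i₀ then (n : ℝ) else 1) * (Real.exp (-(mOne a i)) * mOne a i ^ n / (n.factorial : ℝ))
    with hfdef
  set S : ((p : Fin P) → Fin (N p)) → ℝ := fun i => if i = i₀ then mOne a i₀ else 1 with hSdef
  have h := hasSum_pi_prod f S
    (fun i k => by
      simp only [hfdef]
      refine mul_nonneg ?_ (div_nonneg (mul_nonneg (Real.exp_nonneg _)
        (pow_nonneg (mOne_pos a ha i).le _)) (Nat.cast_nonneg _))
      split <;> simp)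
    (fun i => by
      by_cases h : i = i₀
      · subst h; simpa [hfdef, hSdef] using po_mean (mOne_pos a ha i).le
      · simpa [hfdef, hSdef, h] using po_hasSum (mOne_pos a ha i).le)
  have hfun : (fun X : ((p : Fin P) → Fin (N p)) → ℕ => ∏ i, f i (X i)) =
      fun X => pmf1 a X * (X i₀ : ℝ) := by
    funext X
    rw [hfdef]
    simp only []
    rw [Finset.prod_mul_distrib, Finset.prod_ite_eq' Finset.univ i₀ (fun i => ((X i : ℝ)))]
    simp only [Finset.mem_univ, if_true]
    rw [mul_comm]
    rfl
  have hval : (∏ i, S i) = mOne a i₀ := by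
    rw [hSdef, Finset.prod_ite_eq' Finset.univ i₀ (fun _ => mOne a i₀)]
    simp
  rw [hfun, hval] at h
  exact h

lemma sum_mOne_filter (a : (p : Fin P) → Fin (N p) → ℝ) (p : Fin P) (j : Fin (N p)) :
    ∑ i ∈ Finset.univ.filter (fun i : (q : Fin P) → Fin (N q) => i p = j), mOne a i =
      a p j * ∏ q ∈ Finset.univ.erase p, lam1 a q := by
  classical
  set b : (q : Fin P) → Fin (N q) → ℝ :=
    Function.update a p (fun k => if k = j then a p k else 0) with hbdef
  have hbp : b p = fun k => if k = j then a p k else 0 := Function.update_self _ _ _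
  have hbq : ∀ q, q ≠ p → b q = a q := fun q hq => Function.update_of_ne hq _ _
  have key : ∀ i : (q : Fin P) → Fin (N q),
      (∏ q, b q (i q)) = if i p = j then mOne a i else 0 := by
    intro i
    have hsplit : (∏ q, b q (i q)) = b p (i p) * ∏ q ∈ Finset.univ.erase p, b q (i q) :=
      (Finset.mul_prod_erase Finset.univ _ (Finset.mem_univ p)).symm
    have hsplit' : mOne a i = a p (i p) * ∏ q ∈ Finset.univ.erase p, a q (i q) :=
      (Finset.mul_prod_erase Finset.univ _ (Finset.mem_univ p)).symm
    have herase : ∏ q ∈ Finset.univ.erase p, b q (i q) =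
        ∏ q ∈ Finset.univ.erase p, a q (i q) :=
      Finset.prod_congr rfl fun q hq => by rw [hbq q (Finset.ne_of_mem_erase hq)]
    rw [hsplit, herase]
    simp only [hbp]
    split_ifs with h
    · rw [hsplit', h]
    · rw [zero_mul]
  rw [Finset.sum_filter]
  calc (∑ i : (q : Fin P) → Fin (N q), if i p = j then mOne a i else 0)
      = ∑ i : (q : Fin P) → Fin (N q), ∏ q, b q (i q) := by
        exact Finset.sum_congr rfl fun i _ => (key i).symm
    _ = ∏ q, ∑ k, b q k := by
        rw [Finset.prod_univ_sum]
        simp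
    _ = a p j * ∏ q ∈ Finset.univ.erase p, lam1 a q := by
        rw [← Finset.mul_prod_erase Finset.univ _ (Finset.mem_univ p)]
        congr 1
        · rw [hbp]; simp
        · exact Finset.prod_congr rfl fun q hq => by
            rw [hbq q (Finset.ne_of_mem_erase hq)]; rfl

lemma marg_hasSum (a : (p : Fin P) → Fin (N p) → ℝ) (ha : ∀ p j, 0 < a p j)
    (p : Fin P) (j : Fin (N p)) :
    HasSum (fun X : ((q : Fin P) → Fin (N q)) → ℕ => pmf1 a X * xmarg X p j)
      (a p j * ∏ q ∈ Finset.univ.erase p, lam1 a q) := by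
  classical
  rw [← sum_mOne_filter a p j]
  have h : ∀ X : ((q : Fin P) → Fin (N q)) → ℕ, pmf1 a X * xmarg X p j =
      ∑ i ∈ Finset.univ.filter (fun i : (q : Fin P) → Fin (N q) => i p = j),
        pmf1 a X * (X i : ℝ) := fun X => by rw [xmarg, Finset.mul_sum]
  simp only [h]
  exact hasSum_sum fun i _ => pmf1_moment a ha i

end Model

/-- **Expected Fisher information of the rank-one PCP model.** Under the rank-one PCP
model, `E[x_p(j)] = a_p(j) ∏_{q≠p} λ_q = λ a_p(j)/λ_p`, and consequently the
expectation of the negative Hessian of the loglikelihood (whose `(p,p)` block is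
`diag(x_p(i)/a_p(i)²)` and whose `(p,q)` block, `p ≠ q`, is constant `λ/(λ_p λ_q)`) is
the block matrix with `(p,p)` block entries `[i = j]·λ/(λ_p a_p(i))` and constant
`(p,q)` off-diagonal blocks `λ/(λ_p λ_q)`. Expectations are sums over all count
tensors weighted by their model probability. -/
theorem stmt_16 (P : ℕ) (hP : 2 ≤ P) (N : Fin P → ℕ) (hN : ∀ p, 1 ≤ N p)
    (a : (p : Fin P) → Fin (N p) → ℝ) (ha : ∀ p j, 0 < a p j) :
    (∀ (p : Fin P) (j : Fin (N p)),
      (∑' X : ((q : Fin P) → Fin (N q)) → ℕ, pmf1 a X * xmarg X p j) =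
          a p j * ∏ q ∈ Finset.univ.erase p, lam1 a q ∧
        a p j * ∏ q ∈ Finset.univ.erase p, lam1 a q =
          (∏ q, lam1 a q) * a p j / lam1 a p) ∧
    (∀ (p : Fin P) (i j : Fin (N p)),
      ∑' X : ((q : Fin P) → Fin (N q)) → ℕ,
          pmf1 a X * (if i = j then xmarg X p i / (a p i) ^ 2 else 0) =
        (if i = j then (∏ q, lam1 a q) / (lam1 a p * a p i) else 0)) ∧
    (∀ (p q : Fin P), p ≠ q →
      ∑' X : ((q' : Fin P) → Fin (N q')) → ℕ,
          pmf1 a X * ((∏ s, lam1 a s) / (lam1 a p * lam1 a q)) =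
        (∏ s, lam1 a s) / (lam1 a p * lam1 a q)) := by
  classical
  have hlam : ∀ p : Fin P, 0 < lam1 a p := by
    intro p
    haveI : Nonempty (Fin (N p)) := ⟨⟨0, hN p⟩⟩
    exact Finset.sum_pos (fun j _ => ha p j) Finset.univ_nonempty
  have key1 : ∀ (p : Fin P) (j : Fin (N p)),
      (∑' X : ((q : Fin P) → Fin (N q)) → ℕ, pmf1 a X * xmarg X p j) =
        a p j * ∏ q ∈ Finset.univ.erase p, lam1 a q :=
    fun p j => (marg_hasSum a ha p j).tsum_eq
  have key2 : ∀ (p : Fin P) (j : Fin (N p)),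
      a p j * ∏ q ∈ Finset.univ.erase p, lam1 a q =
        (∏ q, lam1 a q) * a p j / lam1 a p := by
    intro p j
    rw [← Finset.mul_prod_erase Finset.univ (lam1 a) (Finset.mem_univ p)]
    field_simp [(hlam p).ne']
  refine ⟨fun p j => ⟨key1 p j, key2 p j⟩, ?_, ?_⟩
  · intro p i j
    by_cases h : i = j
    · subst h
      simp only [eq_self_iff_true, if_true]
      have heq : (fun X : ((q : Fin P) → Fin (N q)) → ℕ =>
          pmf1 a X * (xmarg X p i / (a p i) ^ 2)) =
          fun X => (pmf1 a X * xmarg X p i) * ((a p i) ^ 2)⁻¹ := by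
        funext X
        rw [div_eq_mul_inv]
        ring
      rw [heq, tsum_mul_right, key1 p i, key2 p i]
      field_simp [(hlam p).ne', (ha p i).ne']
    · simp only [if_neg h]
      simp
  · intro p q hpq
    rw [tsum_mul_right, (pmf1_hasSum a ha).tsum_eq, one_mul]
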